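/- Let {K_w}_{w>0} be a Fejér-type kernel, K_w(t) = w^N K(t^w), and let α > 0 be such that m(K,α) < +∞. Then for every δ ∈ (0,1), ∫_{|1−t|>δ} |K_w(t)| ⟨t⟩^{−1} dt = O(w^{−α}) as w → +∞; i.e., there exist C > 0 and w_0 > 0 such that ∫_{|1−t|>δ} |K_w(t)| ⟨t⟩^{−1} dt ≤ C w^{−α} for all w ≥ w_0. -/

import Mathlib

open MeasureTheory Filter Set Asymptotics
open scoped ENNReal

noncomputable section

/-- The class `Φ`: `φ : [0,∞) → [0,∞)` convex, vanishing exactly at `0`,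
with `φ(u)/u → 0` as `u → 0⁺`. -/
def IsPhiFun (φ : ℝ → ℝ) : Prop :=
  ConvexOn ℝ (Set.Ici 0) φ ∧ (∀ u, 0 ≤ u → 0 ≤ φ u) ∧
  (∀ u, 0 ≤ u → (φ u = 0 ↔ u = 0)) ∧
  Tendsto (fun u => φ u / u) (nhdsWithin 0 (Set.Ioi 0)) (nhds 0)

/-- The positive orthant `ℝ^N_+ = (0,∞)^N`. -/
def RPos (N : ℕ) : Set (Fin N → ℝ) := {x | ∀ i, 0 < x i}

/-- `⟨t⟩ := ∏ᵢ tᵢ`. -/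
def prodCoord {N : ℕ} (t : Fin N → ℝ) : ℝ := ∏ i, t i

/-- Euclidean distance `|1 - t|`. -/
def distOne {N : ℕ} (t : Fin N → ℝ) : ℝ := Real.sqrt (∑ i, (1 - t i) ^ 2)

/-- Euclidean norm `|log t|` of `log t := (log t₁, …, log t_N)`. -/
def logNorm {N : ℕ} (t : Fin N → ℝ) : ℝ := Real.sqrt (∑ i, Real.log (t i) ^ 2)

/-- `t^w := (t₁^w, …, t_N^w)`. -/
def powVec {N : ℕ} (t : Fin N → ℝ) (w : ℝ) : Fin N → ℝ := fun i => t i ^ w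

/-- The (Musielak–Orlicz) `φ`-variation of `g` on `[a,b]`:
`sup_D ∑ᵢ φ(|g(sᵢ) - g(sᵢ₋₁)|)` over all partitions `D` of `[a,b]`. -/
def phiVar1 (φ : ℝ → ℝ) (a b : ℝ) (g : ℝ → ℝ) : ℝ≥0∞ :=
  ⨆ (n : ℕ) (u : Fin (n + 1) → ℝ) (_ : Monotone u) (_ : u 0 = a) (_ : u (Fin.last n) = b),
    ∑ i : Fin n, ENNReal.ofReal (φ |g (u i.succ) - g (u i.castSucc)|)

/-- The point of `ℝ^N` obtained from `x'` (coordinates `≠ j`) by inserting `s`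
at the `j`-th coordinate. -/
def insertCoord {N : ℕ} (j : Fin N) (x' : {i : Fin N // i ≠ j} → ℝ) (s : ℝ) :
    Fin N → ℝ :=
  fun i => if h : i = j then s else x' ⟨i, h⟩

/-- `Φ^φ_j(f, I)`: the integral over `I'_j` (with weight `⟨x'_j⟩⁻¹`) of the `φ`-variations
of the `j`-th sections of `f`, where `I = ∏ᵢ [aᵢ, bᵢ]`. -/
def secVar {N : ℕ} (φ : ℝ → ℝ) (f : (Fin N → ℝ) → ℝ) (a b : Fin N → ℝ) (j : Fin N) :
    ℝ≥0∞ :=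
  ∫⁻ x' in Set.pi Set.univ (fun i : {i : Fin N // i ≠ j} => Set.Icc (a i.1) (b i.1)),
    phiVar1 φ (a j) (b j) (fun s => f (insertCoord j x' s)) *
      ENNReal.ofReal ((∏ i : {i : Fin N // i ≠ j}, x' i)⁻¹)

/-- `Φ^φ(f, I) := (∑_j Φ^φ_j(f,I)²)^{1/2}`. -/
def boxPhi {N : ℕ} (φ : ℝ → ℝ) (f : (Fin N → ℝ) → ℝ) (a b : Fin N → ℝ) : ℝ≥0∞ :=
  (∑ j : Fin N, secVar φ f a b j ^ 2) ^ ((1 : ℝ) / 2)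

/-- `{J_1, …, J_m}`, with `J_k = ∏ᵢ [c k i, d k i]`, is a partition of `I = ∏ᵢ [aᵢ, bᵢ]`
into non-overlapping `N`-dimensional intervals covering `I`. -/
def IsBoxPartition {N : ℕ} (a b : Fin N → ℝ) {m : ℕ} (c d : Fin m → Fin N → ℝ) : Prop :=
  (∀ k i, c k i ≤ d k i) ∧
  (⋃ k, Set.pi Set.univ fun i => Set.Icc (c k i) (d k i)) =
    Set.pi Set.univ (fun i => Set.Icc (a i) (b i)) ∧
  Pairwise fun k l =>
    Disjoint (Set.pi Set.univ fun i => Set.Ioo (c k i) (d k i))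
      (Set.pi Set.univ fun i => Set.Ioo (c l i) (d l i))

/-- The multidimensional (Tonelli-type) `φ`-variation `V^φ_I[f]` of `f` on
`I = ∏ᵢ [aᵢ, bᵢ]`: the sup of `∑ₖ Φ^φ(f, J_k)` over all partitions of `I` into
`N`-dimensional intervals. -/
def varOn {N : ℕ} (φ : ℝ → ℝ) (f : (Fin N → ℝ) → ℝ) (a b : Fin N → ℝ) : ℝ≥0∞ :=
  ⨆ (m : ℕ) (c : Fin m → Fin N → ℝ) (d : Fin m → Fin N → ℝ) (_ : IsBoxPartition a b c d),
    ∑ k, boxPhi φ f (c k) (d k)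

/-- `V^φ[f]`, the `φ`-variation of `f` over the whole `ℝ^N_+`: the sup of `V^φ_I[f]`
over all intervals `I ⊂ ℝ^N_+`. -/
def totalVar {N : ℕ} (φ : ℝ → ℝ) (f : (Fin N → ℝ) → ℝ) : ℝ≥0∞ :=
  ⨆ (a : Fin N → ℝ) (b : Fin N → ℝ) (_ : ∀ i, 0 < a i) (_ : ∀ i, a i ≤ b i),
    varOn φ f a b

/-- `f ∈ BV^φ(ℝ^N_+)`: `f` measurable with `V^φ[λ f] < ∞` for some `λ > 0`. -/
def MemBVphi {N : ℕ} (φ : ℝ → ℝ) (f : (Fin N → ℝ) → ℝ) : Prop :=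
  Measurable f ∧ ∃ l > (0 : ℝ), totalVar φ (fun x => l * f x) < ⊤

/-- The Mellin-type operator `(T f)(s) := ∫_{ℝ^N_+} K(t) f(st) ⟨t⟩⁻¹ dt`. -/
def mellinOp {N : ℕ} (K : (Fin N → ℝ) → ℝ) (f : (Fin N → ℝ) → ℝ) (s : Fin N → ℝ) : ℝ :=
  ∫ t in RPos N, K t * f (s * t) * (prodCoord t)⁻¹

/-- `f` belongs to the domain of the operators `T_w`: the defining integrals exist
finitely for every `s ∈ ℝ^N_+` and `w > 0`. -/
def InDomain {N : ℕ} (K : ℝ → (Fin N → ℝ) → ℝ) (f : (Fin N → ℝ) → ℝ) : Prop :=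
  ∀ w > (0 : ℝ), ∀ s ∈ RPos N,
    IntegrableOn (fun t => K w t * f (s * t) * (prodCoord t)⁻¹) (RPos N)

/-- Condition `(K_w.1)` with absolute constant `A`: each `K_w` is measurable and
integrable w.r.t. `⟨t⟩⁻¹ dt`, with `∫ |K_w| dμ ≤ A` and `∫ K_w dμ = 1`. -/
def KernelCond1 {N : ℕ} (K : ℝ → (Fin N → ℝ) → ℝ) (A : ℝ) : Prop :=
  ∀ w > (0 : ℝ), Measurable (K w) ∧
    IntegrableOn (fun t => K w t * (prodCoord t)⁻¹) (RPos N) ∧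
    (∫ t in RPos N, |K w t| * (prodCoord t)⁻¹) ≤ A ∧
    (∫ t in RPos N, K w t * (prodCoord t)⁻¹) = 1

/-- Condition `(K_w.2)`: for every `δ ∈ (0,1)`,
`∫_{|1-t|>δ} |K_w(t)| ⟨t⟩⁻¹ dt → 0` as `w → +∞`. -/
def KernelCond2 {N : ℕ} (K : ℝ → (Fin N → ℝ) → ℝ) : Prop :=
  ∀ δ : ℝ, 0 < δ → δ < 1 →
    Tendsto (fun w => ∫ t in {t ∈ RPos N | δ < distOne t}, |K w t| * (prodCoord t)⁻¹)
      atTop (nhds 0)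

/-- The `φ`-modulus of smoothness `ω^φ(f, δ) := sup_{|1-t| ≤ δ} V^φ[τ_t f - f]`. -/
def modSmooth {N : ℕ} (φ : ℝ → ℝ) (f : (Fin N → ℝ) → ℝ) (δ : ℝ) : ℝ≥0∞ :=
  ⨆ (t : Fin N → ℝ) (_ : t ∈ RPos N) (_ : distOne t ≤ δ),
    totalVar φ (fun s => f (s * t) - f s)

/-- `f` is locally `φ`-absolutely continuous on `ℝ^N_+` (uniformly, in the sense of
Tonelli) with constant `l`. -/
def LocACphiWith {N : ℕ} (φ : ℝ → ℝ) (f : (Fin N → ℝ) → ℝ) (l : ℝ) : Prop :=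
  ∀ a b : Fin N → ℝ, (∀ i, 0 < a i) → (∀ i, a i ≤ b i) → ∀ j : Fin N,
    ∀ ε > (0 : ℝ), ∃ δ > (0 : ℝ),
      ∀ᵐ x' ∂(volume.restrict
          (Set.pi Set.univ (fun i : {i : Fin N // i ≠ j} => Set.Icc (a i.1) (b i.1)))),
        ∀ n : ℕ, ∀ α β : Fin n → ℝ,
          (∀ i, a j ≤ α i ∧ α i ≤ β i ∧ β i ≤ b j) →
          (Pairwise fun i i' =>
            Disjoint (Set.Ioo (α i) (β i)) (Set.Ioo (α i') (β i'))) →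
          (∑ i, φ (β i - α i)) < δ →
          (∑ i, φ (l * |f (insertCoord j x' (β i)) - f (insertCoord j x' (α i))|)) < ε

/-- `f ∈ AC^φ(ℝ^N_+)`: `f` is measurable, of bounded `φ`-variation and locally
`φ`-absolutely continuous on `ℝ^N_+`. -/
def MemACphi {N : ℕ} (φ : ℝ → ℝ) (f : (Fin N → ℝ) → ℝ) : Prop :=
  MemBVphi φ f ∧ ∃ l > (0 : ℝ), LocACphiWith φ f l

/-- `{K_w}` is an `α`-singular kernel: for every `δ ∈ (0,1)`,
`∫_{|1-t|>δ} |K_w(t)| ⟨t⟩⁻¹ dt = O(w^{-α})` as `w → +∞`. -/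
def AlphaSingular {N : ℕ} (K : ℝ → (Fin N → ℝ) → ℝ) (α : ℝ) : Prop :=
  ∀ δ : ℝ, 0 < δ → δ < 1 →
    (fun w => ∫ t in {t ∈ RPos N | δ < distOne t}, |K w t| * (prodCoord t)⁻¹)
      =O[atTop] fun w : ℝ => w ^ (-α)

/-- The Lipschitz class `V^φ Lip_N(α)`: `f ∈ BV^φ(ℝ^N_+)` such that, for some `μ > 0`,
`V^φ[μ(τ_t f - f)] = O(|log t|^α)` as `|1 - t| → 0`. -/
def MemLipAlpha {N : ℕ} (φ : ℝ → ℝ) (α : ℝ) (f : (Fin N → ℝ) → ℝ) : Prop :=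
  MemBVphi φ f ∧ ∃ μ > (0 : ℝ), ∃ C > (0 : ℝ), ∃ η > (0 : ℝ),
    ∀ t ∈ RPos N, distOne t ≤ η →
      totalVar φ (fun x => μ * (f (x * t) - f x)) ≤ ENNReal.ofReal (C * logNorm t ^ α)

lemma det_aux' {N : ℕ} (c : Fin N → ℝ) :
    (ContinuousLinearMap.pi (fun i => c i • ContinuousLinearMap.proj (R := ℝ)
      (φ := fun _ : Fin N => ℝ) i)).det = ∏ i, c i := by
  have h : ((ContinuousLinearMap.pi (fun i => c i • ContinuousLinearMap.proj (R := ℝ)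
      (φ := fun _ : Fin N => ℝ) i)) : (Fin N → ℝ) →ₗ[ℝ] (Fin N → ℝ))
      = Matrix.toLin' (Matrix.diagonal c) := by
    apply LinearMap.ext
    intro v
    funext i
    simp [Matrix.toLin'_apply, Matrix.mulVec_diagonal, mul_comm]
  rw [ContinuousLinearMap.det, h, LinearMap.det_toLin', Matrix.det_diagonal]

lemma RPos_measurable (N : ℕ) : MeasurableSet (RPos N) := by
  have : RPos N = Set.pi Set.univ (fun _ : Fin N => Set.Ioi (0:ℝ)) := by
    ext x; simp [RPos, Set.mem_pi]
  rw [this]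
  exact MeasurableSet.univ_pi fun _ => measurableSet_Ioi

lemma cov_aux {N : ℕ} {w : ℝ} (hw : 0 < w) (g : (Fin N → ℝ) → ℝ) :
    (IntegrableOn g (RPos N) ↔
      IntegrableOn (fun t => |∏ i, w * t i ^ (w-1)| • g (powVec t w)) (RPos N)) ∧
    (∫ u in RPos N, g u) =
      ∫ t in RPos N, |∏ i, w * t i ^ (w-1)| • g (powVec t w) := by
  set D : (Fin N → ℝ) → ((Fin N → ℝ) →L[ℝ] (Fin N → ℝ)) := fun x =>
    ContinuousLinearMap.pi (fun i => (w * x i ^ (w-1)) • ContinuousLinearMap.proj i) with hD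
  have hs : MeasurableSet (RPos N) := RPos_measurable N
  have hf' : ∀ x ∈ RPos N,
      HasFDerivWithinAt (fun t => powVec t w) (D x) (RPos N) x := by
    intro x hx
    have h : ∀ i, HasFDerivAt (fun t : Fin N → ℝ => t i ^ w)
        ((w * x i ^ (w-1)) • ContinuousLinearMap.proj (R := ℝ)
          (φ := fun _ : Fin N => ℝ) i) x := by
      intro i
      have h1 : HasDerivAt (fun y : ℝ => y ^ w) (w * x i ^ (w-1)) (x i) :=
        (Real.hasStrictDerivAt_rpow_const (Or.inl (ne_of_gt (hx i)))).hasDerivAt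
      exact h1.comp_hasFDerivAt x (hasFDerivAt_apply i x : HasFDerivAt (fun t : Fin N → ℝ => t i)
        (ContinuousLinearMap.proj (R := ℝ) (φ := fun _ : Fin N => ℝ) i) x)
    exact (hasFDerivAt_pi.mpr h).hasFDerivWithinAt
  have hinj : Set.InjOn (fun t => powVec t w) (RPos N) := by
    intro a ha b hb h
    funext i
    have h2 : a i ^ w = b i ^ w := congrFun h i
    have := congrArg (fun y : ℝ => y ^ w⁻¹) h2
    simpa [Real.rpow_rpow_inv (le_of_lt (ha i)) (ne_of_gt hw),
      Real.rpow_rpow_inv (le_of_lt (hb i)) (ne_of_gt hw)] using this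
  have himg : (fun t => powVec t w) '' (RPos N) = RPos N := by
    ext u
    constructor
    · rintro ⟨t, ht, rfl⟩ i
      exact Real.rpow_pos_of_pos (ht i) w
    · intro hu
      refine ⟨powVec u w⁻¹, fun i => Real.rpow_pos_of_pos (hu i) _, ?_⟩
      funext i
      exact Real.rpow_inv_rpow (le_of_lt (hu i)) (ne_of_gt hw)
  have hdet : ∀ x, |(D x).det| = |∏ i, w * x i ^ (w-1)| := by
    intro x; rw [hD]; rw [det_aux']
  constructor
  · have := integrableOn_image_iff_integrableOn_abs_det_fderiv_smul volume hs hf' hinj g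
    rw [himg] at this
    simpa only [hdet] using this
  · have := integral_image_eq_integral_abs_det_fderiv_smul volume hs hf' hinj g
    rw [himg] at this
    simpa only [hdet] using this

lemma logNorm_powVec {N : ℕ} {t : Fin N → ℝ} (ht : t ∈ RPos N) {w : ℝ} (hw : 0 ≤ w) :
    logNorm (powVec t w) = w * logNorm t := by
  unfold logNorm powVec
  have hsum : ∑ i, Real.log (t i ^ w) ^ 2 = w ^ 2 * ∑ i, Real.log (t i) ^ 2 := by
    rw [Finset.mul_sum]
    exact Finset.sum_congr rfl fun i _ => by rw [Real.log_rpow (ht i)]; ring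
  rw [hsum, Real.sqrt_mul (sq_nonneg w), Real.sqrt_sq hw]

set_option maxHeartbeats 1000000 in
/-- Fejér-type kernels `K_w(t) = w^N K(t^w)` with finite absolute moment
`m(K,α)` satisfy `∫_{|1−t|>δ} |K_w(t)| ⟨t⟩⁻¹ dt = O(w^{−α})` for every `δ ∈ (0,1)`. -/
theorem statement7 {N : ℕ} (hN : 1 ≤ N) (K : (Fin N → ℝ) → ℝ) (hmeas : Measurable K)
    (hint : IntegrableOn (fun t => K t * (prodCoord t)⁻¹) (RPos N))
    (hone : (∫ t in RPos N, K t * (prodCoord t)⁻¹) = 1)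
    (α : ℝ) (hα : 0 < α)
    (hmom : IntegrableOn (fun t => logNorm t ^ α * |K t| * (prodCoord t)⁻¹) (RPos N)) :
    ∀ δ : ℝ, 0 < δ → δ < 1 →
      ∃ C > (0 : ℝ), ∃ w₀ > (0 : ℝ), ∀ w ≥ w₀,
        (∫ t in {t ∈ RPos N | δ < distOne t},
            |w ^ N * K (powVec t w)| * (prodCoord t)⁻¹) ≤ C * w ^ (-α) := by
  intro δ hδ0 hδ1
  have hN1 : (1:ℝ) ≤ (N:ℝ) := by exact_mod_cast hN
  have hsN : 1 ≤ Real.sqrt N := by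
    rw [show (1:ℝ) = Real.sqrt 1 by simp]
    exact Real.sqrt_le_sqrt hN1
  set d : ℝ := δ / Real.sqrt N with hd
  have hd0 : 0 < d := div_pos hδ0 (lt_of_lt_of_le one_pos hsN)
  have hd1 : d < 1 := lt_of_le_of_lt (div_le_self (le_of_lt hδ0) hsN) hδ1
  set c : ℝ := Real.log (1 + d) with hc
  have hc0 : 0 < c := Real.log_pos (by linarith)
  -- lower bound for logNorm on the far set
  have hlow : ∀ t, t ∈ RPos N → δ < distOne t → c ≤ logNorm t := by
    intro t ht hδt
    obtain ⟨i, hi⟩ : ∃ i, d < |1 - t i| := by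
      by_contra hcon
      push_neg at hcon
      have hsum : ∑ i, (1 - t i) ^ 2 ≤ ∑ _i : Fin N, d ^ 2 := by
        apply Finset.sum_le_sum
        intro i _
        calc (1 - t i) ^ 2 = |1 - t i| ^ 2 := (sq_abs _).symm
          _ ≤ d ^ 2 := pow_le_pow_left₀ (abs_nonneg _) (hcon i) 2
      have h1 : distOne t ≤ Real.sqrt ((N : ℝ) * d ^ 2) := by
        rw [distOne]
        apply Real.sqrt_le_sqrt
        simpa [Finset.card_univ, nsmul_eq_mul] using hsum
      have h2 : Real.sqrt ((N : ℝ) * d ^ 2) = Real.sqrt N * d := by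
        rw [Real.sqrt_mul (by positivity), Real.sqrt_sq hd0.le]
      have h3 : Real.sqrt N * d = δ := by
        rw [hd, mul_div_cancel₀]
        positivity
      rw [h2, h3] at h1
      linarith
    have habs : c ≤ |Real.log (t i)| := by
      rcases lt_abs.mp hi with h | h
      · -- t i < 1 - d
        have ht1 : t i < 1 - d := by linarith
        have hlog : Real.log (t i) ≤ Real.log (1 - d) := Real.log_le_log (ht i) ht1.le
        have hneg : Real.log (t i) < 0 :=
          Real.log_neg (ht i) (by linarith)
        have h2 : c ≤ -Real.log (1 - d) := by
          rw [← Real.log_inv]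
          apply Real.log_le_log (by positivity)
          rw [inv_eq_one_div, le_div_iff₀ (by linarith)]
          nlinarith
        rw [abs_of_neg hneg]
        linarith
      · -- t i > 1 + d
        have : c ≤ Real.log (t i) := Real.log_le_log (by linarith) (by linarith)
        exact this.trans (le_abs_self _)
    have hle : |Real.log (t i)| ≤ logNorm t := by
      rw [logNorm, ← Real.sqrt_sq_eq_abs]
      apply Real.sqrt_le_sqrt
      exact Finset.single_le_sum (f := fun j => Real.log (t j) ^ 2) (fun j _ => sq_nonneg _) (Finset.mem_univ i)
    linarith
  set g : (Fin N → ℝ) → ℝ := fun u => logNorm u ^ α * |K u| * (prodCoord u)⁻¹ with hg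
  set M : ℝ := ∫ u in RPos N, g u with hM
  have hM0 : 0 ≤ M := by
    apply setIntegral_nonneg (RPos_measurable N)
    intro x hx
    have hpx : 0 < prodCoord x := Finset.prod_pos fun i _ => hx i
    have h1 : 0 ≤ logNorm x ^ α := Real.rpow_nonneg (Real.sqrt_nonneg _) α
    rw [hg]
    exact mul_nonneg (mul_nonneg h1 (abs_nonneg _)) (inv_nonneg.2 hpx.le)
  refine ⟨c ^ (-α) * (M + 1), mul_pos (Real.rpow_pos_of_pos hc0 _) (by linarith), 1, one_pos, ?_⟩
  intro w hw1
  have hw0 : (0:ℝ) < w := lt_of_lt_of_le one_pos hw1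
  obtain ⟨hiff, heq⟩ := cov_aux (N := N) hw0 g
  set H : (Fin N → ℝ) → ℝ := fun t =>
    w ^ N * (logNorm (powVec t w) ^ α * |K (powVec t w)|) * (prodCoord t)⁻¹ with hH
  have hcong : Set.EqOn (fun t => |∏ i, w * t i ^ (w-1)| • g (powVec t w)) H (RPos N) := by
    intro t ht
    have hprodpos : 0 < ∏ i, t i := Finset.prod_pos fun i _ => ht i
    have hpw : ∀ i, (0:ℝ) < t i ^ w := fun i => Real.rpow_pos_of_pos (ht i) w
    have hprodw : 0 < ∏ i, t i ^ w := Finset.prod_pos fun i _ => hpw i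
    have h1 : |∏ i, w * t i ^ (w-1)| = w ^ N * ((∏ i, t i ^ w) / ∏ i, t i) := by
      rw [abs_of_pos (Finset.prod_pos fun i _ =>
        mul_pos hw0 (Real.rpow_pos_of_pos (ht i) _))]
      rw [Finset.prod_mul_distrib, Finset.prod_const, Finset.card_univ, Fintype.card_fin]
      congr 1
      rw [← Finset.prod_div_distrib]
      exact Finset.prod_congr rfl fun i _ => by
        rw [Real.rpow_sub (ht i), Real.rpow_one]
    have h2 : prodCoord (powVec t w) = ∏ i, t i ^ w := rfl
    show |∏ i, w * t i ^ (w-1)| • g (powVec t w) = H t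
    rw [smul_eq_mul, hg, h1, hH]
    simp only [h2, show prodCoord t = ∏ i, t i from rfl]
    field_simp
  have hHint : IntegrableOn H (RPos N) :=
    (hiff.mp hmom).congr_fun hcong (RPos_measurable N)
  have hHeq : (∫ t in RPos N, H t) = M := by
    rw [hM, heq]
    exact (setIntegral_congr_fun (RPos_measurable N) hcong).symm
  set A : Set (Fin N → ℝ) := {t ∈ RPos N | δ < distOne t} with hA
  have hAmeas : MeasurableSet A := by
    have hcont : Continuous (fun t : Fin N → ℝ => distOne t) := by
      apply Real.continuous_sqrt.comp
      exact continuous_finset_sum _ fun i _ => (continuous_const.sub (continuous_apply i)).pow 2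
    exact (RPos_measurable N).inter (measurableSet_lt measurable_const hcont.measurable)
  have hsub : A ⊆ RPos N := fun t ht => ht.1
  -- pointwise bound on A
  have hpt : ∀ t ∈ A, |w ^ N * K (powVec t w)| * (prodCoord t)⁻¹ ≤
      (c ^ (-α) * w ^ (-α)) * H t := by
    rintro t ⟨ht, hδt⟩
    have hL : logNorm (powVec t w) = w * logNorm t := logNorm_powVec ht hw0.le
    have hlnt : c ≤ logNorm t := hlow t ht hδt
    have hwc : 0 < w * c := mul_pos hw0 hc0
    have hLge : w * c ≤ logNorm (powVec t w) := by
      rw [hL]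
      exact mul_le_mul_of_nonneg_left hlnt hw0.le
    have hone' : (1:ℝ) ≤ c ^ (-α) * w ^ (-α) * logNorm (powVec t w) ^ α := by
      have h1 : (w * c) ^ α ≤ logNorm (powVec t w) ^ α :=
        Real.rpow_le_rpow hwc.le hLge hα.le
      have h2 : (w * c) ^ α = w ^ α * c ^ α := Real.mul_rpow hw0.le hc0.le
      have hcpos : 0 < c ^ α := Real.rpow_pos_of_pos hc0 α
      have hwpos : 0 < w ^ α := Real.rpow_pos_of_pos hw0 α
      rw [Real.rpow_neg hc0.le, Real.rpow_neg hw0.le]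
      calc (1:ℝ) = (c ^ α)⁻¹ * (w ^ α)⁻¹ * (w ^ α * c ^ α) := by field_simp [mul_comm]
        _ ≤ (c ^ α)⁻¹ * (w ^ α)⁻¹ * logNorm (powVec t w) ^ α := by
            apply mul_le_mul_of_nonneg_left (h2 ▸ h1)
            positivity
    have hprodpos : 0 < prodCoord t := Finset.prod_pos fun i _ => ht i
    have hbase : |w ^ N * K (powVec t w)| * (prodCoord t)⁻¹ =
        w ^ N * |K (powVec t w)| * (prodCoord t)⁻¹ := by
      rw [abs_mul, abs_of_pos (pow_pos hw0 N)]
    rw [hbase, hH]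
    have hrhs : (c ^ (-α) * w ^ (-α)) *
        (w ^ N * (logNorm (powVec t w) ^ α * |K (powVec t w)|) * (prodCoord t)⁻¹) =
        (c ^ (-α) * w ^ (-α) * logNorm (powVec t w) ^ α) *
          (w ^ N * |K (powVec t w)| * (prodCoord t)⁻¹) := by ring
    rw [hrhs]
    nth_rewrite 1 [← one_mul (w ^ N * |K (powVec t w)| * (prodCoord t)⁻¹)]
    apply mul_le_mul_of_nonneg_right hone'
    positivity
  have hHA : IntegrableOn (fun t => (c ^ (-α) * w ^ (-α)) * H t) A :=
    (hHint.mono_set hsub).const_mul _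
  have hLmeas : Measurable (fun t : Fin N → ℝ =>
      |w ^ N * K (powVec t w)| * (prodCoord t)⁻¹) := by
    have hpv : Measurable (fun t : Fin N → ℝ => powVec t w) := by
      have : Continuous (fun t : Fin N → ℝ => powVec t w) :=
        continuous_pi fun i => (Real.continuous_rpow_const hw0.le).comp (continuous_apply i)
      exact this.measurable
    have hprod : Measurable (fun t : Fin N → ℝ => prodCoord t) :=
      Finset.univ.measurable_prod fun i _ => measurable_pi_apply i
    exact ((measurable_const.mul (hmeas.comp hpv)).abs).mul hprod.inv
  have hLint : IntegrableOn (fun t =>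
      |w ^ N * K (powVec t w)| * (prodCoord t)⁻¹) A := by
    apply Integrable.mono' hHA hLmeas.aestronglyMeasurable
    filter_upwards [ae_restrict_mem hAmeas] with t ht
    have hprodpos : 0 < prodCoord t := Finset.prod_pos fun i _ => ht.1 i
    rw [Real.norm_eq_abs, abs_of_nonneg (mul_nonneg (abs_nonneg _) (inv_nonneg.2 hprodpos.le))]
    exact hpt t ht
  have hHnonneg : 0 ≤ᵐ[volume.restrict (RPos N)] H := by
    filter_upwards [ae_restrict_mem (RPos_measurable N)] with t ht
    have hprodpos : 0 < prodCoord t := Finset.prod_pos fun i _ => ht i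
    have h1 : 0 ≤ logNorm (powVec t w) ^ α := Real.rpow_nonneg (Real.sqrt_nonneg _) α
    rw [hH]
    exact mul_nonneg (mul_nonneg (by positivity) (mul_nonneg h1 (abs_nonneg _)))
      (inv_nonneg.2 hprodpos.le)
  have hwα : (0:ℝ) < w ^ (-α) := Real.rpow_pos_of_pos hw0 _
  have hcα : (0:ℝ) < c ^ (-α) := Real.rpow_pos_of_pos hc0 _
  calc (∫ t in A, |w ^ N * K (powVec t w)| * (prodCoord t)⁻¹)
      ≤ ∫ t in A, (c ^ (-α) * w ^ (-α)) * H t :=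
        setIntegral_mono_on hLint hHA hAmeas hpt
    _ = (c ^ (-α) * w ^ (-α)) * ∫ t in A, H t := integral_const_mul _ _
    _ ≤ (c ^ (-α) * w ^ (-α)) * ∫ t in RPos N, H t := by
        apply mul_le_mul_of_nonneg_left _ (by positivity)
        exact setIntegral_mono_set hHint hHnonneg (HasSubset.Subset.eventuallyLE hsub)
    _ = (c ^ (-α) * w ^ (-α)) * M := by rw [hHeq]
    _ ≤ (c ^ (-α) * (M + 1)) * w ^ (-α) := by nlinarith


end
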